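/- Let ζ ∈ S² and define V : ℝ³∖{0} → ℝ by V(x) = (1/(4π))·log(1 − (x·ζ)/‖x‖). Then for every x ∈ ℝ³ with x ≠ 0 and x/‖x‖ ≠ ζ, V is twice continuously differentiable on a neighborhood of x and its Euclidean Laplacian satisfies ΔV(x) = −1/(4π‖x‖²). (This is the degree-zero homogeneous encoding of the defining property Δ*_η G(ξ·η) = −1/(4π), η ≠ ξ, of the fundamental solution for the Beltrami operator, using Δ(U(x/‖x‖)) = ‖x‖⁻²·(Δ*U)(x/‖x‖).) -/

import Mathlib

open MeasureTheory Real
open scoped RealInnerProductSpace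

noncomputable section

/-- ℝ³ as Euclidean space. -/
abbrev E3 : Type := EuclideanSpace ℝ (Fin 3)

/-- The coordinate Laplacian of a function u : ℝ³ → ℝ. -/
def lap (u : E3 → ℝ) (x : E3) : ℝ :=
  ∑ i : Fin 3, fderiv ℝ (fun y => fderiv ℝ u y (EuclideanSpace.single i 1)) x
    (EuclideanSpace.single i 1)

lemma myNormDeriv {y : E3} (hy : y ≠ 0) :
    HasFDerivAt (fun z : E3 => ‖z‖) (‖y‖⁻¹ • (innerSL ℝ y : E3 →L[ℝ] ℝ)) y := by
  have hq : HasFDerivAt (fun z : E3 => ⟪z, z⟫)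
      ((fderivInnerCLM ℝ (y, y)).comp
        ((ContinuousLinearMap.id ℝ E3).prod (ContinuousLinearMap.id ℝ E3))) y :=
    (hasFDerivAt_id y).inner ℝ (hasFDerivAt_id y)
  have hqy : ⟪y, y⟫ ≠ 0 := by
    rw [real_inner_self_eq_norm_sq]
    exact pow_ne_zero 2 (norm_ne_zero_iff.2 hy)
  have hs := HasDerivAt.comp_hasFDerivAt (f := fun z : E3 => ⟪z, z⟫) y
    (Real.hasDerivAt_sqrt hqy) hq
  have h2 : (Real.sqrt ∘ fun z : E3 => ⟪z, z⟫) = fun z : E3 => ‖z‖ := by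
    funext z
    simp only [Function.comp, real_inner_self_eq_norm_sq]
    exact Real.sqrt_sq (norm_nonneg z)
  rw [h2] at hs
  refine hs.congr_fderiv ?_
  symm
  ext v
  have hsy : Real.sqrt ⟪y, y⟫ = ‖y‖ := by
    rw [real_inner_self_eq_norm_sq]
    exact Real.sqrt_sq (norm_nonneg y)
  simp only [ContinuousLinearMap.smul_apply, ContinuousLinearMap.comp_apply,
    ContinuousLinearMap.prod_apply, ContinuousLinearMap.id_apply, innerSL_apply_apply,
    fderivInnerCLM_apply, hsy, smul_eq_mul]
  rw [real_inner_comm v y]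
  have : ‖y‖ ≠ 0 := norm_ne_zero_iff.2 hy
  field_simp
  ring

lemma myInnerDeriv (w x : E3) :
    HasFDerivAt (fun y : E3 => ⟪y, w⟫) (innerSL ℝ w : E3 →L[ℝ] ℝ) x := by
  have h : (fun y : E3 => ⟪y, w⟫) = ⇑(innerSL ℝ w : E3 →L[ℝ] ℝ) := by
    funext y
    simp only [innerSL_apply_apply]
    exact real_inner_comm w y
  rw [h]
  exact (innerSL ℝ w : E3 →L[ℝ] ℝ).hasFDerivAt

lemma scalar_id (r B p : ℝ) (hr : r ≠ 0) (hG : r - B ≠ 0) (hp : p ≠ 0) :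
    (1/(4*p)) * (-(((r-B)⁻¹)^2) * ((r⁻¹)^2) - (r-B)⁻¹ * (r⁻¹)^3 + 2*(r⁻¹)^4) * r^2
      + (1/(4*p)) * (2*((r-B)⁻¹)^2 * r⁻¹) * B
      + (1/(4*p)) * (-(((r-B)⁻¹)^2)) * 1
      + 3 * ((1/(4*p)) * ((r-B)⁻¹ * r⁻¹ - (r⁻¹)^2))
    = -(1/(4*p*r^2)) := by
  field_simp
  ring

set_option maxHeartbeats 2000000 in
/-- the degree-zero homogeneous encoding of the defining property
Δ*_η G(ξ·η) = −1/(4π) of the fundamental solution for the Beltrami operator. -/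
theorem fundSol_beltrami (ζ : E3) (hζ : ζ ∈ Metric.sphere (0 : E3) 1)
    (V : E3 → ℝ) (hV : ∀ x : E3, V x = (1 / (4 * π)) * Real.log (1 - ⟪x, ζ⟫ / ‖x‖))
    (x : E3) (hx : x ≠ 0) (hxζ : ‖x‖⁻¹ • x ≠ ζ) :
    ContDiffAt ℝ 2 V x ∧ lap V x = -(1 / (4 * π * ‖x‖ ^ 2)) := by
  have hζ1 : ‖ζ‖ = 1 := mem_sphere_zero_iff_norm.mp hζ
  have hr : (0:ℝ) < ‖x‖ := norm_pos_iff.2 hx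
  -- x is in the open set U
  have hxU : ⟪x, ζ⟫ < ‖x‖ := by
    have h := inner_lt_norm_mul_iff_real (x := x) (y := ζ)
    rw [hζ1, mul_one, one_smul] at h
    apply h.2
    intro hcon
    apply hxζ
    conv_lhs => rw [hcon]
    rw [norm_smul, hζ1, mul_one, Real.norm_eq_abs, abs_of_pos hr, smul_smul,
      inv_mul_cancel₀ hr.ne', one_smul]
  set U : Set E3 := {y : E3 | ⟪y, ζ⟫ < ‖y‖} with hUdef
  have hU : IsOpen U := isOpen_lt (continuous_id.inner continuous_const) continuous_norm
  have hmem : ∀ y ∈ U, y ≠ 0 ∧ (0:ℝ) < ‖y‖ ∧ (0:ℝ) < ‖y‖ - ⟪y, ζ⟫ := by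
    intro y hy
    have h1 : ⟪y, ζ⟫ < ‖y‖ := hy
    have hy0 : y ≠ 0 := by
      intro h; rw [h] at h1; simp at h1
    exact ⟨hy0, norm_pos_iff.2 hy0, by linarith⟩
  set c : ℝ := 1 / (4 * π) with hcdef
  -- derivative formula on U
  have hD : ∀ y ∈ U, HasFDerivAt V
      (c • ((‖y‖ - ⟪y, ζ⟫)⁻¹ • (‖y‖⁻¹ • (innerSL ℝ y : E3 →L[ℝ] ℝ) - innerSL ℝ ζ)
        - ‖y‖⁻¹ • (‖y‖⁻¹ • (innerSL ℝ y : E3 →L[ℝ] ℝ)))) y := by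
    intro y hy
    obtain ⟨hy0, hry, hgy⟩ := hmem y hy
    have hn := myNormDeriv hy0
    have hgd : HasFDerivAt (fun z : E3 => ‖z‖ - ⟪z, ζ⟫)
        (‖y‖⁻¹ • (innerSL ℝ y : E3 →L[ℝ] ℝ) - innerSL ℝ ζ) y := hn.sub (myInnerDeriv ζ y)
    have hlg := HasDerivAt.comp_hasFDerivAt (f := fun z : E3 => ‖z‖ - ⟪z, ζ⟫) y
      (Real.hasDerivAt_log hgy.ne') hgd
    have hln := HasDerivAt.comp_hasFDerivAt (f := fun z : E3 => ‖z‖) y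
      (Real.hasDerivAt_log hry.ne') hn
    have hcomb := (hlg.sub hln).const_mul c
    apply hcomb.congr_of_eventuallyEq
    filter_upwards [hU.mem_nhds hy] with z hz
    obtain ⟨hz0, hrz, hgz⟩ := hmem z hz
    rw [hV z]
    simp only [Function.comp_def, Pi.sub_apply]
    rw [show (1 : ℝ) - ⟪z, ζ⟫ / ‖z‖ = (‖z‖ - ⟪z, ζ⟫) / ‖z‖ by field_simp]
    rw [Real.log_div hgz.ne' hrz.ne']
  constructor
  · -- smoothness
    have hVfun : V = fun y : E3 => c * Real.log (1 - ⟪y, ζ⟫ / ‖y‖) := funext hV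
    rw [hVfun]
    apply ContDiffAt.mul contDiffAt_const
    apply ContDiffAt.log
    · exact (contDiffAt_const.sub (((contDiff_id.inner ℝ contDiff_const).contDiffAt).div
        (contDiffAt_norm ℝ hx) hr.ne'))
    · have : (0:ℝ) < 1 - ⟪x, ζ⟫ / ‖x‖ := by
        rw [sub_pos, div_lt_one hr]; exact hxU
      exact this.ne'
  · -- Laplacian
    have hGpos : (0:ℝ) < ‖x‖ - ⟪x, ζ⟫ := by linarith
    have hterm : ∀ i : Fin 3,
        fderiv ℝ (fun y => fderiv ℝ V y (EuclideanSpace.single i 1)) x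
          (EuclideanSpace.single i 1) =
        (c * (-(((‖x‖ - ⟪x, ζ⟫)⁻¹)^2) * ((‖x‖⁻¹)^2) - (‖x‖ - ⟪x, ζ⟫)⁻¹ * (‖x‖⁻¹)^3
            + 2 * (‖x‖⁻¹)^4)) * (x i * x i)
          + (c * (2 * ((‖x‖ - ⟪x, ζ⟫)⁻¹)^2 * ‖x‖⁻¹)) * (x i * ζ i)
          + (c * (-(((‖x‖ - ⟪x, ζ⟫)⁻¹)^2))) * (ζ i * ζ i)
          + (c * ((‖x‖ - ⟪x, ζ⟫)⁻¹ * ‖x‖⁻¹ - (‖x‖⁻¹)^2)) := by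
      intro i
      set e : E3 := EuclideanSpace.single i (1:ℝ) with hedef
      have ha : HasFDerivAt (fun y : E3 => ⟪y, e⟫) (innerSL ℝ e : E3 →L[ℝ] ℝ) x :=
        myInnerDeriv e x
      have hninv : HasFDerivAt (fun y : E3 => ‖y‖⁻¹)
          ((-(‖x‖^2)⁻¹) • (‖x‖⁻¹ • (innerSL ℝ x : E3 →L[ℝ] ℝ))) x := by
        simpa [Function.comp_def] using
          HasDerivAt.comp_hasFDerivAt (f := fun z : E3 => ‖z‖) x
            (hasDerivAt_inv hr.ne') (myNormDeriv hx)
      have hginv : HasFDerivAt (fun y : E3 => (‖y‖ - ⟪y, ζ⟫)⁻¹)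
          ((-((‖x‖ - ⟪x, ζ⟫)^2)⁻¹) • (‖x‖⁻¹ • (innerSL ℝ x : E3 →L[ℝ] ℝ) - innerSL ℝ ζ)) x := by
        simpa [Function.comp_def] using
          HasDerivAt.comp_hasFDerivAt (f := fun z : E3 => ‖z‖ - ⟪z, ζ⟫) x
            (hasDerivAt_inv hGpos.ne') ((myNormDeriv hx).sub (myInnerDeriv ζ x))
      have h1 := (hninv.mul ha).sub_const (⟪ζ, e⟫)
      have h2 := hginv.mul h1
      have h3 := hninv.mul (hninv.mul ha)
      have h5 := (h2.sub h3).const_mul c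
      have heq : (fun y => fderiv ℝ V y e) =ᶠ[nhds x]
          (fun y : E3 => c * ((‖y‖ - ⟪y, ζ⟫)⁻¹ * (‖y‖⁻¹ * ⟪y, e⟫ - ⟪ζ, e⟫)
            - ‖y‖⁻¹ * (‖y‖⁻¹ * ⟪y, e⟫))) := by
        filter_upwards [hU.mem_nhds hxU] with z hz
        rw [(hD z hz).fderiv]
        simp [ContinuousLinearMap.smul_apply, ContinuousLinearMap.sub_apply, smul_eq_mul]
      have hkey := heq.fderiv_eq.trans h5.fderiv
      rw [hkey]
      have hxe : ⟪x, e⟫ = x i := by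
        simp [hedef, EuclideanSpace.inner_single_right]
      have hζe : ⟪ζ, e⟫ = ζ i := by
        simp [hedef, EuclideanSpace.inner_single_right]
      have hee : ⟪e, e⟫ = 1 := by
        simp [hedef, EuclideanSpace.inner_single_right, EuclideanSpace.single_apply]
      simp only [ContinuousLinearMap.add_apply, ContinuousLinearMap.smul_apply,
        ContinuousLinearMap.sub_apply, innerSL_apply_apply, Pi.mul_apply, smul_eq_mul, hxe, hζe, hee]
      simp only [← inv_pow]
      ring
    unfold lap
    rw [Finset.sum_congr rfl (fun i _ => hterm i)]
    rw [Finset.sum_add_distrib, Finset.sum_add_distrib, Finset.sum_add_distrib]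
    rw [← Finset.mul_sum, ← Finset.mul_sum, ← Finset.mul_sum, Finset.sum_const]
    have hxx : ∑ i : Fin 3, x i * x i = ‖x‖^2 := by
      rw [← real_inner_self_eq_norm_sq, PiLp.inner_apply]
      simp [RCLike.inner_apply, mul_comm, sq]
    have hxζ' : ∑ i : Fin 3, x i * ζ i = ⟪x, ζ⟫ := by
      rw [PiLp.inner_apply]
      simp [RCLike.inner_apply, mul_comm]
    have hζζ : ∑ i : Fin 3, ζ i * ζ i = 1 := by
      have : ⟪ζ, ζ⟫ = 1 := by rw [real_inner_self_eq_norm_sq, hζ1]; norm_num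
      rw [← this, PiLp.inner_apply]
      simp [RCLike.inner_apply, mul_comm, sq]
    rw [hxx, hxζ', hζζ]
    simp only [Finset.card_univ, Fintype.card_fin, nsmul_eq_mul, Nat.cast_ofNat]
    rw [hcdef]
    have hπ : π ≠ 0 := Real.pi_ne_zero
    have hG' : ‖x‖ - ⟪x, ζ⟫ ≠ 0 := hGpos.ne'
    linear_combination scalar_id ‖x‖ ⟪x, ζ⟫ π hr.ne' hG' hπ
  end
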